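/- For every integer n ≥ 1, every r with 0 ≤ r ≤ n−1 and every k ∈ {1,2}, the centralizer of a^{2r}b^k in U_{6n} is C_{U_{6n}}(a^{2r}b^k) = {a^{2s}b^j : 0 ≤ s ≤ n−1, j ∈ {0,1,2}} = ⟨a², b⟩, a subgroup of order 3n. -/

import Mathlib

/-- The inversion automorphism of `Multiplicative (ZMod 3)` (i.e. `b ↦ b⁻¹`). -/
def negAut : MulAut (Multiplicative (ZMod 3)) := MulEquiv.inv (Multiplicative (ZMod 3))

lemma negAut_sq : negAut * negAut = 1 := by
  ext x
  simp [negAut]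

/-- The action of `ZMod (2*n)` on `Multiplicative (ZMod 3)`, where the generator acts
by inversion (negation). -/
def U6nAct (n : ℕ) : Multiplicative (ZMod (2 * n)) →* MulAut (Multiplicative (ZMod 3)) :=
  AddMonoidHom.toMultiplicativeLeft
    (ZMod.lift (2 * n) ⟨zmultiplesHom _ (Additive.ofMul negAut), by
      show ((2 * n : ℕ) : ℤ) • Additive.ofMul negAut = 0
      have : negAut ^ (2 * n) = 1 := by
        rw [pow_mul, pow_two, negAut_sq, one_pow]
      rw [← zpow_natCast negAut, Nat.cast_mul] at this
      rw [show ((2 * n : ℕ) : ℤ) • Additive.ofMul negAut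
            = Additive.ofMul (negAut ^ ((2 * n : ℕ) : ℤ)) from rfl]
      rw [Nat.cast_mul, this]; rfl⟩)

/-- The group `U_{6n} = ⟨a, b | a^(2n) = b³ = 1, a⁻¹ b a = b⁻¹⟩`, realized as the
semidirect product `(ZMod 3) ⋊ (ZMod (2n))` where the generator of `ZMod (2n)` acts by
negation. -/
abbrev U6n (n : ℕ) := SemidirectProduct (Multiplicative (ZMod 3))
    (Multiplicative (ZMod (2 * n))) (U6nAct n)

/-- The generator `a` of `U_{6n}`, of order `2n`. -/
def Ua (n : ℕ) : U6n n := SemidirectProduct.inr (Multiplicative.ofAdd 1)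

/-- The generator `b` of `U_{6n}`, of order `3`. -/
def Ub (n : ℕ) : U6n n := SemidirectProduct.inl (Multiplicative.ofAdd 1)

/-- The non-commuting graph of `U_{6n}`: vertices are the non-central elements, two
distinct vertices are adjacent iff they do not commute. -/
def ncGraph (n : ℕ) : SimpleGraph {x : U6n n // x ∉ Subgroup.center (U6n n)} where
  Adj u v := u.val * v.val ≠ v.val * u.val
  symm := ⟨fun _ _ h => fun e => h e.symm⟩
  loopless := ⟨fun _ h => h rfl⟩

lemma U6nAct_natCast (n m : ℕ) :
    U6nAct n (Multiplicative.ofAdd ((m : ZMod (2*n)))) = negAut ^ m := by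
  have h : ((m : ZMod (2*n))) = ((m : ℤ) : ZMod (2*n)) := by push_cast; rfl
  unfold U6nAct
  rw [AddMonoidHom.toMultiplicativeLeft]
  simp only [Equiv.coe_fn_mk, MonoidHom.coe_mk, OneHom.coe_mk, toAdd_ofAdd, h, ZMod.lift_coe]
  change Additive.toMul (ZMod.lift (2 * n) _ ((m : ℤ) : ZMod (2*n))) = _
  rw [ZMod.lift_coe]
  show Additive.toMul ((m : ℤ) • Additive.ofMul negAut) = _
  rw [← ofMul_zpow]
  simp

lemma negAut_pow (m : ℕ) : negAut ^ m = if Even m then 1 else negAut := by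
  induction m with
  | zero => simp
  | succ k ih =>
    rw [pow_succ, ih]
    rcases Nat.even_or_odd k with h | h
    · simp [h, Nat.even_add_one, h.add_one]
    · have : ¬ Even k := by simpa using h
      simp [this, Nat.even_add_one, negAut_sq]
lemma Ua_pow (n p : ℕ) : Ua n ^ p
    = SemidirectProduct.inr (Multiplicative.ofAdd ((p : ZMod (2*n)))) := by
  rw [Ua, ← map_pow]
  congr 1
  rw [← ofAdd_nsmul]
  simp

lemma Ub_pow (n j : ℕ) : Ub n ^ j
    = SemidirectProduct.inl (Multiplicative.ofAdd ((j : ZMod 3))) := by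
  rw [Ub, ← map_pow]
  congr 1
  rw [← ofAdd_nsmul]
  simp

lemma UaUb_left (n p j : ℕ) (hp : Even p) :
    (Ua n ^ p * Ub n ^ j).left = Multiplicative.ofAdd ((j : ZMod 3)) := by
  rw [Ua_pow, Ub_pow]
  simp only [SemidirectProduct.mul_left, SemidirectProduct.left_inr,
    SemidirectProduct.right_inr, SemidirectProduct.left_inl, one_mul]
  rw [U6nAct_natCast, negAut_pow, if_pos hp]
  rfl

lemma UaUb_right (n p j : ℕ) :
    (Ua n ^ p * Ub n ^ j).right = Multiplicative.ofAdd ((p : ZMod (2*n))) := by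
  rw [Ua_pow, Ub_pow]
  simp
lemma mem_centralizer_iff_even (n : ℕ) (hn : 1 ≤ n) (r k : ℕ) (hk : k = 1 ∨ k = 2)
    (x : U6n n) :
    x ∈ Subgroup.centralizer {Ua n ^ (2 * r) * Ub n ^ k} ↔
      Even (Multiplicative.toAdd x.right).val := by
  have : NeZero (2 * n) := ⟨by omega⟩
  rw [Subgroup.mem_centralizer_singleton_iff]
  set g := Ua n ^ (2 * r) * Ub n ^ k with hg
  have hgl : g.left = Multiplicative.ofAdd ((k : ZMod 3)) := UaUb_left n _ k ⟨r, by ring⟩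
  have hgr : g.right = Multiplicative.ofAdd (((2*r : ℕ) : ZMod (2*n))) := UaUb_right n _ k
  have hx : x.right = Multiplicative.ofAdd (((Multiplicative.toAdd x.right).val : ZMod (2*n))) := by
    rw [ZMod.natCast_val, ZMod.cast_id]
    rfl
  constructor
  · intro h
    have hleft := congrArg SemidirectProduct.left h
    simp only [SemidirectProduct.mul_left, hgl, hgr] at hleft
    rw [U6nAct_natCast, negAut_pow, if_pos ⟨r, by ring⟩] at hleft
    by_contra hodd
    rw [hx, U6nAct_natCast, negAut_pow, if_neg hodd] at hleft
    have h2 : negAut (Multiplicative.ofAdd ((k : ZMod 3))) = Multiplicative.ofAdd ((k : ZMod 3)) := by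
      apply mul_left_cancel (a := x.left)
      rw [hleft]
      simp [mul_comm]
    have : (-(k : ZMod 3)) = (k : ZMod 3) := by
      simpa [negAut] using congrArg Multiplicative.toAdd h2
    rcases hk with rfl | rfl <;> revert this <;> decide
  · intro h
    ext
    · simp only [SemidirectProduct.mul_left, hgl, hgr]
      rw [U6nAct_natCast, negAut_pow, if_pos ⟨r, by ring⟩, hx, U6nAct_natCast,
        negAut_pow, if_pos h]
      simp [mul_comm]
    · simp [mul_comm]
lemma centralizer_setEq (n : ℕ) (hn : 1 ≤ n) (r : ℕ) (k : ℕ) (hk : k = 1 ∨ k = 2) :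
    (Subgroup.centralizer {Ua n ^ (2 * r) * Ub n ^ k} : Set (U6n n)) =
      {x | ∃ s < n, ∃ j < 3, x = Ua n ^ (2 * s) * Ub n ^ j} := by
  have : NeZero (2 * n) := ⟨by omega⟩
  ext x
  rw [SetLike.mem_coe, mem_centralizer_iff_even n hn r k hk]
  constructor
  · rintro ⟨c, hc⟩
    set t := (Multiplicative.toAdd x.right).val with ht
    have htlt : t < 2 * n := ZMod.val_lt _
    refine ⟨c, by omega, (Multiplicative.toAdd x.left).val, ZMod.val_lt _, ?_⟩
    ext
    · rw [UaUb_left n _ _ ⟨c, by ring⟩, ZMod.natCast_val, ZMod.cast_id]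
      rfl
    · rw [UaUb_right]
      have : ((2 * c : ℕ) : ZMod (2*n)) = ((t : ℕ) : ZMod (2*n)) := by
        congr 1; omega
      rw [this, ht, ZMod.natCast_val, ZMod.cast_id]
      rfl
  · rintro ⟨s, hs, j, hj, rfl⟩
    rw [UaUb_right]
    simp only [toAdd_ofAdd]
    rw [ZMod.val_natCast, Nat.mod_eq_of_lt (by omega)]
    exact ⟨s, by ring⟩

lemma centralizer_closureEq (n : ℕ) (hn : 1 ≤ n) (r : ℕ) (k : ℕ) (hk : k = 1 ∨ k = 2) :
    Subgroup.centralizer {Ua n ^ (2 * r) * Ub n ^ k}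
      = Subgroup.closure {Ua n ^ 2, Ub n} := by
  have hnz : NeZero (2 * n) := ⟨by omega⟩
  apply le_antisymm
  · intro x hx
    have : x ∈ (Subgroup.centralizer {Ua n ^ (2 * r) * Ub n ^ k} : Set (U6n n)) := hx
    rw [centralizer_setEq n hn r k hk] at this
    obtain ⟨s, hs, j, hj, rfl⟩ := this
    have h1 : Ua n ^ (2 * s) = (Ua n ^ 2) ^ s := by rw [← pow_mul]
    rw [h1]
    exact mul_mem (Subgroup.pow_mem _ (Subgroup.subset_closure (by simp)) s)
      (Subgroup.pow_mem _ (Subgroup.subset_closure (by simp)) j)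
  · rw [Subgroup.closure_le]
    rintro y (rfl | rfl)
    · rw [SetLike.mem_coe, mem_centralizer_iff_even n hn r k hk]
      have h2 : Ua n ^ 2 = Ua n ^ (2*1) * Ub n ^ 0 := by simp
      rw [h2, UaUb_right]
      simp only [toAdd_ofAdd]
      rw [ZMod.val_natCast]
      exact Nat.even_iff.2 (by rw [Nat.mod_mod_of_dvd _ ⟨n, rfl⟩])
    · rw [SetLike.mem_coe, mem_centralizer_iff_even n hn r k hk]
      have h2 : Ub n = Ua n ^ (2*0) * Ub n ^ 1 := by simp
      rw [h2, UaUb_right]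
      simp only [toAdd_ofAdd]
      rw [show ((2*0 : ℕ) : ZMod (2*n)) = ((0:ℕ) : ZMod (2*n)) by norm_num,
        ZMod.val_natCast]
      simp
/-- The parity homomorphism. -/
def parHom (n : ℕ) : U6n n →* Multiplicative (ZMod 2) :=
  (AddMonoidHom.toMultiplicative ((ZMod.castHom ⟨n, rfl⟩ (ZMod 2)).toAddMonoidHom)).comp
    SemidirectProduct.rightHom

lemma centralizer_eq_ker (n : ℕ) (hn : 1 ≤ n) (r : ℕ) (k : ℕ) (hk : k = 1 ∨ k = 2) :
    Subgroup.centralizer {Ua n ^ (2 * r) * Ub n ^ k} = (parHom n).ker := by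
  have hnz : NeZero (2 * n) := ⟨by omega⟩
  ext x
  rw [mem_centralizer_iff_even n hn r k hk, MonoidHom.mem_ker]
  have : parHom n x = Multiplicative.ofAdd
      ((((Multiplicative.toAdd x.right).val : ℕ) : ZMod 2)) := by
    show Multiplicative.ofAdd (ZMod.castHom ⟨n, rfl⟩ (ZMod 2) (Multiplicative.toAdd x.right)) = _
    congr 1
    rw [ZMod.castHom_apply, ← ZMod.natCast_val]
  rw [this, ofAdd_eq_one, ZMod.natCast_eq_zero_iff]
  constructor
  · rintro ⟨c, hc⟩; exact ⟨c, by omega⟩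
  · rintro ⟨c, hc⟩; exact ⟨c, by omega⟩

lemma parHom_surj (n : ℕ) (hn : 1 ≤ n) : Function.Surjective (parHom n) := by
  intro c
  refine ⟨Ua n ^ (Multiplicative.toAdd c).val, ?_⟩
  rw [Ua_pow]
  unfold parHom
  simp only [MonoidHom.comp_apply, SemidirectProduct.rightHom_inr]
  show Multiplicative.ofAdd (ZMod.castHom ⟨n, rfl⟩ (ZMod 2)
    (Multiplicative.toAdd (Multiplicative.ofAdd (((Multiplicative.toAdd c).val : ZMod (2*n)))))) = c
  rw [toAdd_ofAdd, map_natCast, ZMod.natCast_val, ZMod.cast_id]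
  rfl

def u6nEquivProd (n : ℕ) : U6n n ≃ Multiplicative (ZMod 3) × Multiplicative (ZMod (2*n)) where
  toFun x := (x.left, x.right)
  invFun p := ⟨p.1, p.2⟩
  left_inv x := rfl
  right_inv p := rfl

lemma card_U6n (n : ℕ) : Nat.card (U6n n) = 6 * n := by
  rw [Nat.card_congr (u6nEquivProd n), Nat.card_prod,
    Nat.card_congr (Multiplicative.toAdd (α := ZMod 3)),
    Nat.card_congr (Multiplicative.toAdd (α := ZMod (2*n))), Nat.card_zmod, Nat.card_zmod]
  ring

lemma card_centralizer (n : ℕ) (hn : 1 ≤ n) (r : ℕ) (k : ℕ) (hk : k = 1 ∨ k = 2) :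
    Nat.card (Subgroup.centralizer {Ua n ^ (2 * r) * Ub n ^ k} : Subgroup (U6n n)) = 3 * n := by
  have hker := centralizer_eq_ker n hn r k hk
  have hidx : (parHom n).ker.index = 2 := by
    rw [Subgroup.index_ker]
    have : (parHom n).range = ⊤ := MonoidHom.range_eq_top.2 (parHom_surj n hn)
    rw [this]
    rw [Nat.card_congr Subgroup.topEquiv.toEquiv,
      Nat.card_congr (Multiplicative.toAdd (α := ZMod 2)), Nat.card_zmod]
  have hmul := Subgroup.card_mul_index (parHom n).ker
  rw [hidx, card_U6n] at hmul
  rw [hker]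
  omega

/-- For `0 ≤ r ≤ n-1` and `k ∈ {1,2}`, the centralizer of `a^(2r)·b^k` in `U_{6n}` is
`{a^(2s)·b^j : 0 ≤ s ≤ n-1, j ∈ {0,1,2}} = ⟨a², b⟩`, a subgroup of order `3n`. -/
theorem U6n_centralizer_even_ab (n : ℕ) (hn : 1 ≤ n) (r : ℕ) (hr : r < n) (k : ℕ)
    (hk : k = 1 ∨ k = 2) :
    (Subgroup.centralizer {Ua n ^ (2 * r) * Ub n ^ k} : Set (U6n n)) =
      {x | ∃ s < n, ∃ j < 3, x = Ua n ^ (2 * s) * Ub n ^ j} ∧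
    Subgroup.centralizer {Ua n ^ (2 * r) * Ub n ^ k}
      = Subgroup.closure {Ua n ^ 2, Ub n} ∧
    Nat.card (Subgroup.centralizer {Ua n ^ (2 * r) * Ub n ^ k} : Subgroup (U6n n))
      = 3 * n := by
  exact ⟨centralizer_setEq n hn r k hk, centralizer_closureEq n hn r k hk,
    card_centralizer n hn r k hk⟩
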